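/- Every LC-loop is a middle nuclear square loop: if a loop satisfies (x·x)·(y·z) = (x·(x·y))·z for all x,y,z, then it satisfies x·((y·y)·z) = (x·(y·y))·z for all x,y,z. -/
import Mathlib


/-- A loop: a set with multiplication, left division `ldiv` (written `\`),
right division `rdiv` (written `/`), and a two-sided identity `e`. -/
structure Loop (α : Type) where
  mul : α → α → α
  ldiv : α → α → α
  rdiv : α → α → α
  e : α
  mul_ldiv : ∀ a b, mul a (ldiv a b) = b
  rdiv_mul : ∀ a b, mul (rdiv b a) a = b
  ldiv_mul : ∀ a b, ldiv a (mul a b) = b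
  mul_rdiv : ∀ a b, rdiv (mul b a) a = b
  e_mul : ∀ a, mul e a = a
  mul_e : ∀ a, mul a e = a

theorem stmt_8 (α : Type) (L : Loop α) (h : ∀ x y z : α, L.mul (L.mul x x) (L.mul y z) = L.mul (L.mul x (L.mul x y)) z) :
    ∀ x y z : α, L.mul x (L.mul (L.mul y y) z) = L.mul (L.mul x (L.mul y y)) z := by
  -- left alternative: (pp)q = p(pq)
  have la : ∀ p q, L.mul (L.mul p p) q = L.mul p (L.mul p q) := by
    intro p q
    have := h p q L.e
    simpa [L.mul_e] using this
  -- squares are left nuclear: (pp)(qr) = ((pp)q)r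
  have nl : ∀ p q r, L.mul (L.mul p p) (L.mul q r) = L.mul (L.mul (L.mul p p) q) r := by
    intro p q r
    rw [h p q r, la]
  -- tt·(t\e) = t
  have inv1 : ∀ t, L.mul (L.mul t t) (L.ldiv t L.e) = t := by
    intro t
    rw [la, L.mul_ldiv, L.mul_e]
  -- left inverse property: (t\e)(tw) = w
  have lip : ∀ t w, L.mul (L.ldiv t L.e) (L.mul t w) = w := by
    intro t w
    have k : L.mul (L.mul (L.mul t t) (L.ldiv t L.e))
        (L.ldiv (L.ldiv t L.e) w) = L.mul (L.mul t t) w := by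
      rw [← nl, L.mul_ldiv]
    rw [inv1 t] at k
    have h1 : L.mul t (L.ldiv (L.ldiv t L.e) w) = L.mul t (L.mul t w) := by
      rw [k, la]
    have h2 : L.ldiv (L.ldiv t L.e) w = L.mul t w := by
      have := congrArg (L.ldiv t) h1
      simpa [L.ldiv_mul] using this
    rw [← h2, L.mul_ldiv]
  -- (t\e)·t = e
  have inv2 : ∀ t, L.mul (L.ldiv t L.e) t = L.e := by
    intro t
    have := lip t L.e
    rwa [L.mul_e] at this
  -- (t\e)\e = t
  have invinv : ∀ t, L.ldiv (L.ldiv t L.e) L.e = t := by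
    intro t
    have h3 := L.ldiv_mul (L.ldiv t L.e) t
    rwa [inv2 t] at h3
  -- Z0 : (tt·(x\e))·(x·m) = tt·m
  have Z0 : ∀ t x m, L.mul (L.mul (L.mul t t) (L.ldiv x L.e)) (L.mul x m)
      = L.mul (L.mul t t) m := by
    intro t x m
    rw [← nl, lip]
  -- Z2 : ((tt·(x\e))\e)·(tt·m) = x·m
  have Z2 : ∀ t x m, L.mul (L.ldiv (L.mul (L.mul t t) (L.ldiv x L.e)) L.e)
      (L.mul (L.mul t t) m) = L.mul x m := by
    intro t x m
    have := lip (L.mul (L.mul t t) (L.ldiv x L.e)) (L.mul x m)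
    rwa [Z0] at this
  -- main proof
  intro w y z
  set a := L.mul y y with ha
  set X := L.ldiv (L.ldiv a (L.ldiv w L.e)) L.e with hX
  have hX' : L.ldiv X L.e = L.ldiv a (L.ldiv w L.e) := invinv _
  have key : ∀ m, L.mul w (L.mul a m) = L.mul X m := by
    intro m
    have := Z2 y X m
    rwa [hX', L.mul_ldiv, invinv] at this
  have hXw : X = L.mul w a := by
    have := key L.e
    rw [L.mul_e, L.mul_e] at this
    exact this.symm
  rw [key z, hXw]
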